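/- In a finite Coxeter group (W, S), an element w is the longest element of the standard parabolic subgroup W_{S(w)} if and only if its left descent set equals its support: D_L(w) = S(w). -/

import Mathlib

namespace CoxeterSystem

variable {B W : Type*} [Group W] {M : CoxeterMatrix B} (cs : CoxeterSystem M W)

/-- The Bruhat order on `W`, defined via the subword property: `u ≤ w` iff some
reduced word for `w` has a subword whose product is `u`. -/
def bruhatLE (u w : W) : Prop :=
  ∃ ω : List B, cs.IsReduced ω ∧ cs.wordProd ω = w ∧
    ∃ ω' : List B, ω'.Sublist ω ∧ cs.wordProd ω' = u

/-- The right weak order on `W`: `u ≤_R w` iff `ℓ(u) + ℓ(u⁻¹ w) = ℓ(w)`. -/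
def rightWeakLE (u w : W) : Prop :=
  cs.length u + cs.length (u⁻¹ * w) = cs.length w

/-- The left weak order on `W`: `u ≤_L w` iff `ℓ(u) + ℓ(w u⁻¹) = ℓ(w)`. -/
def leftWeakLE (u w : W) : Prop :=
  cs.length u + cs.length (w * u⁻¹) = cs.length w

/-- The support of `w`: the set of simple reflections occurring in some reduced word
for `w`. -/
def support (w : W) : Set B :=
  {i | ∃ ω : List B, cs.IsReduced ω ∧ cs.wordProd ω = w ∧ i ∈ ω}

/-- The standard parabolic subgroup `W_J` generated by the simple reflections in `J`. -/
def parabolic (J : Set B) : Subgroup W := Subgroup.closure (cs.simple '' J)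

/-- `w` is the longest element of the subgroup `H`. -/
def IsLongestOf (H : Subgroup W) (w : W) : Prop :=
  w ∈ H ∧ ∀ u ∈ H, cs.length u ≤ cs.length w

/-- The left descent set of `w`. -/
def leftDescents (w : W) : Set B :=
  {i | cs.length (cs.simple i * w) < cs.length w}

end CoxeterSystem

set_option linter.unusedSectionVars false

namespace CoxAux

open CoxeterSystem List

variable {B W : Type*} [Group W] {M : CoxeterMatrix B} (cs : CoxeterSystem M W)

local prefix:100 "s" => cs.simple
local prefix:100 "π" => cs.wordProd
local prefix:100 "ℓ" => cs.length

/-- Indicator function with values in `ZMod 2`. -/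
noncomputable def delta (x y : W) : ZMod 2 :=
  haveI := Classical.propDecidable (x = y); if x = y then 1 else 0

lemma delta_eq {x y : W} (h : x = y) : delta x y = 1 := by simp [delta, h]

lemma delta_ne {x y : W} (h : x ≠ y) : delta x y = 0 := by simp [delta, h]

/-- The Bourbaki `η` map on `W × ZMod 2`. -/
noncomputable def eta (i : B) : Function.End (W × ZMod 2) :=
  fun p => (s i * p.1 * s i, p.2 + delta p.1 (s i))

lemma eta_liftable : M.IsLiftable (eta cs) := by
  intro i j
  obtain ⟨a, ha⟩ : ∃ x : W, x = s i * s j := ⟨_, rfl⟩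
  have ham : a ^ M i j = 1 := by rw [ha]; exact cs.simple_mul_simple_pow i j
  have hainv : a⁻¹ = s j * s i := by
    rw [ha, mul_inv_rev, cs.inv_simple, cs.inv_simple]
  have hjaj : s j * a * s j = a⁻¹ := by
    rw [hainv, ha]
    simp only [mul_assoc, cs.simple_mul_simple_cancel_left]
    rw [cs.simple_mul_simple_self, mul_one]
  have hpow : ∀ k : ℕ, s j * a ^ k * s j = (a ^ k)⁻¹ := by
    intro k
    induction k with
    | zero => simp
    | succ k ih =>
      have h1 : s j * a ^ k * s j * (s j * a * s j) = s j * a ^ (k + 1) * s j := by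
        rw [pow_succ]
        simp only [mul_assoc, cs.simple_mul_simple_cancel_left]
      rw [← h1, ih, hjaj, pow_succ', mul_inv_rev]
  have hsja : ∀ k : ℕ, s j * a ^ k = (a ^ k)⁻¹ * s j := by
    intro k
    calc s j * a ^ k = s j * a ^ k * s j * s j := by
          rw [mul_assoc (s j * a ^ k), cs.simple_mul_simple_self, mul_one]
    _ = (a ^ k)⁻¹ * s j := by rw [hpow]
  -- the sequence of dihedral "reflections"
  set c : ℕ → W := fun r => (a ^ r)⁻¹ * s j with hc
  have hc0 : c 0 = s j := by simp [hc]
  have hc1 : c 1 = s j * s i * s j := by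
    simp only [hc, pow_one, hainv, mul_assoc]
  have hkey : ∀ r : ℕ, a⁻¹ * c r = c (r + 1) := by
    intro r
    show a⁻¹ * ((a ^ r)⁻¹ * s j) = (a ^ (r + 1))⁻¹ * s j
    rw [pow_succ, mul_inv_rev, mul_assoc]
  have hconj : ∀ r : ℕ, a⁻¹ * c r * a = c (r + 2) := by
    intro r
    have h1 : c r * a = c r * a := rfl
    -- c r * a = (a^r)⁻¹ * (s j * a) = (a^r)⁻¹ * a⁻¹ * s j = c (r+1)
    have h2 : c r * a = c (r + 1) := by
      show (a ^ r)⁻¹ * s j * a = (a ^ (r + 1))⁻¹ * s j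
      rw [mul_assoc, (by rw [pow_one] : s j * a = s j * a ^ 1), hsja 1, pow_one,
        pow_succ', mul_inv_rev, mul_assoc]
    rw [mul_assoc, h2, hkey (r + 1)]
  -- the indicator sums
  set χ : ℕ → W → ZMod 2 := fun k t => delta t (c (2 * k)) + delta t (c (2 * k + 1)) with hχ
  have hχ0 : ∀ t : W, χ 0 t = delta t (s j) + delta t (s j * s i * s j) := by
    intro t
    simp only [hχ]
    norm_num [hc0, hc1]
  have hχconj : ∀ (k : ℕ) (t : W), χ k (a * t * a⁻¹) = χ (k + 1) t := by
    intro k t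
    have key : ∀ r : ℕ, delta (a * t * a⁻¹) (c r) = delta t (c (r + 2)) := by
      intro r
      by_cases hcase : t = c (r + 2)
      · rw [delta_eq hcase, delta_eq]
        rw [hcase, ← hconj r]
        simp only [mul_assoc, mul_inv_cancel_left, inv_mul_cancel_left, mul_inv_cancel,
          inv_mul_cancel, mul_one, one_mul]
      · rw [delta_ne hcase, delta_ne]
        intro hcon
        apply hcase
        rw [← hconj r, ← hcon]
        simp only [mul_assoc, mul_inv_cancel_left, inv_mul_cancel_left, mul_inv_cancel,
          inv_mul_cancel, mul_one, one_mul]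
    simp only [hχ, key]
    congr 2 <;> ring
  set g : Function.End (W × ZMod 2) := eta cs i * eta cs j with hg
  have hgapp : ∀ p : W × ZMod 2, g p = (a * p.1 * a⁻¹, p.2 + χ 0 p.1) := by
    intro p
    have h0 : g p = eta cs i (eta cs j p) := rfl
    rw [h0]
    simp only [eta]
    have he : delta (s j * p.1 * s j) (s i) = delta p.1 (s j * s i * s j) := by
      by_cases hcase : p.1 = s j * s i * s j
      · rw [delta_eq hcase, delta_eq]
        rw [hcase]
        simp only [mul_assoc, cs.simple_mul_simple_cancel_left]
        rw [cs.simple_mul_simple_self, mul_one]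
      · rw [delta_ne hcase, delta_ne]
        intro hcon
        apply hcase
        have step : s j * (s j * p.1 * s j) * s j = s j * s i * s j := by rw [hcon]
        calc p.1 = s j * (s j * (p.1 * (s j * s j))) := by
              rw [cs.simple_mul_simple_self, mul_one, cs.simple_mul_simple_cancel_left]
        _ = s j * (s j * p.1 * s j) * s j := by simp only [mul_assoc]
        _ = s j * s i * s j := step
    have hfst : s i * (s j * p.1 * s j) * s i = a * p.1 * a⁻¹ := by
      rw [hainv, ha]
      simp only [mul_assoc]
    rw [Prod.ext_iff]
    refine ⟨hfst, ?_⟩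
    show p.2 + delta p.1 (s j) + delta (s j * p.1 * s j) (s i) = p.2 + χ 0 p.1
    rw [he, hχ0, add_assoc]
  have hgn : ∀ (n : ℕ) (p : W × ZMod 2),
      (g ^ n) p = (a ^ n * p.1 * (a ^ n)⁻¹, p.2 + ∑ k ∈ Finset.range n, χ k p.1) := by
    intro n
    induction n with
    | zero => intro p; simp [Function.End.one_def]
    | succ n ih =>
      intro p
      have h1 : (g ^ (n + 1)) p = (g ^ n) (g p) := by
        rw [pow_succ]; rfl
      rw [h1, hgapp p, ih]
      rw [Prod.ext_iff]
      constructor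
      · show a ^ n * (a * p.1 * a⁻¹) * (a ^ n)⁻¹ = a ^ (n + 1) * p.1 * (a ^ (n + 1))⁻¹
        calc a ^ n * (a * p.1 * a⁻¹) * (a ^ n)⁻¹
            = (a ^ n * a) * p.1 * (a ^ n * a)⁻¹ := by
              rw [mul_inv_rev]
              simp only [mul_assoc]
        _ = a ^ (n + 1) * p.1 * (a ^ (n + 1))⁻¹ := by rw [← pow_succ]
      · show p.2 + χ 0 p.1 + ∑ k ∈ Finset.range n, χ k (a * p.1 * a⁻¹)
            = p.2 + ∑ k ∈ Finset.range (n + 1), χ k p.1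
        have h2 : ∀ k ∈ Finset.range n, χ k (a * p.1 * a⁻¹) = χ (k + 1) p.1 :=
          fun k _ => hχconj k p.1
        rw [Finset.sum_congr rfl h2, Finset.sum_range_succ' (fun k => χ k p.1) n]
        rw [add_assoc, add_comm (χ 0 p.1)]
  -- now conclude
  show g ^ M i j = 1
  funext p
  rw [hgn (M i j) p, ham]
  have hsum : ∑ k ∈ Finset.range (M i j), χ k p.1 = 0 := by
    have hsplit : ∀ n : ℕ, ∑ k ∈ Finset.range n, χ k p.1
        = ∑ r ∈ Finset.range (2 * n), delta p.1 (c r) := by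
      intro n
      induction n with
      | zero => simp
      | succ n ih =>
        rw [Finset.sum_range_succ, ih, (by ring : 2 * (n + 1) = 2 * n + 1 + 1),
          Finset.sum_range_succ, Finset.sum_range_succ]
        simp only [hχ]
        ring
    have hcper : ∀ r : ℕ, c (M i j + r) = c r := by
      intro r
      show (a ^ (M i j + r))⁻¹ * s j = (a ^ r)⁻¹ * s j
      rw [pow_add, ham, one_mul]
    rw [hsplit (M i j), two_mul, Finset.sum_range_add]
    have heq : ∀ r ∈ Finset.range (M i j), delta p.1 (c (M i j + r)) = delta p.1 (c r) := by
      intro r _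
      rw [hcper r]
    rw [Finset.sum_congr rfl heq]
    have hz : ∀ x : ZMod 2, x + x = 0 := by decide
    exact hz _
  rw [hsum]
  show (1 * p.1 * 1⁻¹, p.2 + 0) = p
  simp

/-- The parity homomorphism. -/
noncomputable def phi : W →* Function.End (W × ZMod 2) :=
  cs.lift ⟨eta cs, eta_liftable cs⟩

lemma phi_simple (i : B) : phi cs (s i) = eta cs i :=
  cs.lift_apply_simple (eta_liftable cs) i

lemma phi_fst (w : W) : ∀ p : W × ZMod 2, (phi cs w p).1 = w * p.1 * w⁻¹ := by
  refine cs.simple_induction_left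
    (p := fun w => ∀ p : W × ZMod 2, (phi cs w p).1 = w * p.1 * w⁻¹) w ?_ ?_
  · intro p
    rw [map_one]
    show p.1 = 1 * p.1 * 1⁻¹
    simp
  · intro w i ih p
    rw [map_mul, phi_simple]
    show s i * (phi cs w p).1 * s i = s i * w * p.1 * (s i * w)⁻¹
    rw [ih p, mul_inv_rev, cs.inv_simple]
    simp only [mul_assoc]

lemma phi_snd (w : W) : ∀ (t : W) (ε : ZMod 2),
    (phi cs w (t, ε)).2 = ε + (phi cs w (t, 0)).2 := by
  refine cs.simple_induction_left
    (p := fun w => ∀ (t : W) (ε : ZMod 2), (phi cs w (t, ε)).2 = ε + (phi cs w (t, 0)).2)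
    w ?_ ?_
  · intro t ε
    rw [map_one]
    show ε = ε + (0 : ZMod 2)
    rw [add_zero]
  · intro w i ih t ε
    rw [map_mul, phi_simple]
    show (phi cs w (t, ε)).2 + delta (phi cs w (t, ε)).1 (s i)
      = ε + ((phi cs w (t, 0)).2 + delta (phi cs w (t, 0)).1 (s i))
    rw [ih t ε, phi_fst, phi_fst]
    ring

/-- The parity cocycle: `nu cs w t = 1` iff `t` is a right inversion of `w`. -/
noncomputable def nu (w t : W) : ZMod 2 := (phi cs w (t, 0)).2

lemma nu_simple (i : B) (t : W) : nu cs (s i) t = delta t (s i) := by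
  show (phi cs (s i) (t, 0)).2 = delta t (s i)
  rw [phi_simple]
  show (0 : ZMod 2) + delta t (s i) = delta t (s i)
  rw [zero_add]

lemma nu_one (t : W) : nu cs 1 t = 0 := by
  show (phi cs 1 (t, 0)).2 = 0
  rw [map_one]
  rfl

lemma nu_mul (u v t : W) : nu cs (u * v) t = nu cs v t + nu cs u (v * t * v⁻¹) := by
  show (phi cs (u * v) (t, 0)).2 = _
  rw [map_mul]
  have h1 : (phi cs u * phi cs v) (t, 0) = phi cs u (phi cs v (t, 0)) := rfl
  rw [h1]
  have h2 : phi cs v (t, 0) = (v * t * v⁻¹, nu cs v t) := by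
    rw [Prod.ext_iff]
    exact ⟨phi_fst cs v (t, 0), rfl⟩
  rw [h2, phi_snd]
  rfl

lemma nu_inv (w t : W) : nu cs w⁻¹ t = nu cs w (w⁻¹ * t * w) := by
  have h := nu_mul cs w w⁻¹ t
  rw [mul_inv_cancel, nu_one, inv_inv] at h
  have key : ∀ x y : ZMod 2, x + y = 0 → x = y := by decide
  exact key _ _ h.symm

lemma nu_mem_rightInvSeq (ω : List B) {t : W} (h : nu cs (π ω) t = 1) :
    t ∈ cs.rightInvSeq ω := by
  induction ω with
  | nil =>
    rw [cs.wordProd_nil, nu_one] at h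
    exact absurd h (by decide)
  | cons i ω ih =>
    rw [cs.wordProd_cons, nu_mul] at h
    show t ∈ (π ω)⁻¹ * s i * π ω :: cs.rightInvSeq ω
    by_cases hcase : t = (π ω)⁻¹ * s i * π ω
    · exact hcase ▸ List.mem_cons_self
    · have hne : π ω * t * (π ω)⁻¹ ≠ s i := by
        intro hcon
        apply hcase
        rw [← hcon]
        simp only [mul_assoc, mul_inv_cancel_left, inv_mul_cancel_left, mul_inv_cancel,
          inv_mul_cancel, mul_one, one_mul]
      rw [nu_simple, delta_ne hne, add_zero] at h
      exact List.mem_cons_of_mem _ (ih h)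

lemma nu_refl_self {t : W} (ht : cs.IsReflection t) : nu cs t t = 1 := by
  obtain ⟨x, k, rfl⟩ := ht
  have h1 : x * s k * x⁻¹ = x * (s k * x⁻¹) := by rw [mul_assoc]
  rw [h1, nu_mul]
  have h2 : (s k * x⁻¹) * (x * (s k * x⁻¹)) * (s k * x⁻¹)⁻¹ = s k := by
    rw [mul_inv_rev, inv_inv, cs.inv_simple]
    simp only [mul_assoc, inv_mul_cancel_left, mul_inv_cancel_left]
    rw [cs.simple_mul_simple_cancel_left]
  rw [h2]
  have h3 : nu cs (s k * x⁻¹) (x * (s k * x⁻¹)) = nu cs x⁻¹ (x * (s k * x⁻¹)) + 1 := by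
    rw [nu_mul]
    congr 1
    have h4 : x⁻¹ * (x * (s k * x⁻¹)) * (x⁻¹)⁻¹ = s k := by
      rw [inv_inv]
      simp only [mul_assoc, inv_mul_cancel_left, inv_mul_cancel, mul_one]
    rw [h4, nu_simple, delta_eq rfl]
  rw [h3]
  have h5 : nu cs x⁻¹ (x * (s k * x⁻¹)) = nu cs x (s k) := by
    rw [nu_inv]
    congr 1
    simp only [mul_assoc, inv_mul_cancel_left, inv_mul_cancel, mul_one]
  rw [h5]
  have key : ∀ u : ZMod 2, u + 1 + u = 1 := by decide
  exact key _

lemma nu_of_isRightInversion {w t : W} (h : cs.IsRightInversion w t) :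
    nu cs w t = 1 := by
  by_contra hn
  have h0 : nu cs w t = 0 := by
    rcases (by decide : ∀ x : ZMod 2, x = 0 ∨ x = 1) (nu cs w t) with h' | h'
    · exact h'
    · exact absurd h' hn
  have hwt : nu cs (w * t) t = 1 := by
    rw [nu_mul]
    have h1 : t * t * t⁻¹ = t := by
      rw [mul_assoc, mul_inv_cancel, mul_one]
    rw [h1, nu_refl_self cs h.1, h0, add_zero]
  obtain ⟨ω, hred, hω⟩ := cs.exists_reduced_word' (w * t)
  rw [hω] at hwt
  have hmem := nu_mem_rightInvSeq cs ω hwt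
  have hinv := cs.isRightInversion_of_mem_rightInvSeq hred hmem
  rw [← hω] at hinv
  have h2 : w * t * t = w := by rw [mul_assoc, h.1.mul_self, mul_one]
  have h3 := hinv.2
  rw [h2] at h3
  have h4 := h.2
  omega

lemma isRightInversion_of_nu {w t : W} (ht : cs.IsReflection t) (h : nu cs w t = 1) :
    cs.IsRightInversion w t := by
  obtain ⟨ω, hred, hω⟩ := cs.exists_reduced_word' w
  rw [hω] at h ⊢
  exact cs.isRightInversion_of_mem_rightInvSeq hred (nu_mem_rightInvSeq cs ω h)

/-- Left strong exchange: realized as erasing a letter. -/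
lemma exists_eraseIdx_of_isLeftInversion (ω : List B) {t : W}
    (ht : cs.IsReflection t) (h : ℓ (t * π ω) < ℓ (π ω)) :
    ∃ j, j < ω.length ∧ π (ω.eraseIdx j) = t * π ω := by
  have hli : cs.IsLeftInversion (π ω) t := ⟨ht, h⟩
  have hri : cs.IsRightInversion (π ω)⁻¹ t := cs.isRightInversion_inv_iff.mpr hli
  have hnu : nu cs ((π ω))⁻¹ t = 1 := nu_of_isRightInversion cs hri
  have hrev : (π ω)⁻¹ = π (ω.reverse) := (cs.wordProd_reverse ω).symm
  rw [hrev] at hnu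
  have hmem : t ∈ cs.rightInvSeq ω.reverse := nu_mem_rightInvSeq cs _ hnu
  rw [cs.rightInvSeq_reverse, List.mem_reverse] at hmem
  obtain ⟨n, hn, hget⟩ := List.mem_iff_getElem.mp hmem
  have hlen : (cs.leftInvSeq ω).length = ω.length := cs.length_leftInvSeq ω
  refine ⟨n, by omega, ?_⟩
  have hgetD : (cs.leftInvSeq ω).getD n 1 = t := by
    rw [List.getD_eq_getElem _ _ hn, hget]
  rw [← hgetD]
  exact (cs.getD_leftInvSeq_mul_wordProd ω n).symm

/-- The key "Z-property" for covers. -/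
lemma z_property {t y₁ : W} (i : B) (ht : cs.IsReflection t)
    (hcov : ℓ (t * y₁) = ℓ y₁ + 1)
    (hasc : ℓ y₁ < ℓ (s i * y₁))
    (hdesc : ℓ (s i * (t * y₁)) < ℓ (t * y₁)) :
    s i * y₁ = t * y₁ := by
  obtain ⟨δ, hδred, hδ⟩ := cs.exists_reduced_word' (s i * (t * y₁))
  have hδlen : δ.length = ℓ (s i * (t * y₁)) := by
    rw [hδ]
    exact hδred.symm
  have hπ : π (i :: δ) = t * y₁ := by
    rw [cs.wordProd_cons, ← hδ, cs.simple_mul_simple_cancel_left]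
  have hty : ℓ (t * π (i :: δ)) < ℓ (π (i :: δ)) := by
    rw [hπ, ← mul_assoc, ht.mul_self, one_mul]
    omega
  obtain ⟨j, hj, hje⟩ := exists_eraseIdx_of_isLeftInversion cs (i :: δ) ht hty
  rw [hπ, ← mul_assoc, ht.mul_self, one_mul] at hje
  -- hje : π ((i :: δ).eraseIdx j) = y₁
  cases j with
  | zero =>
    rw [List.eraseIdx_cons_zero] at hje
    rw [← hδ] at hje
    -- hje : s i * (t * y₁) = y₁
    calc s i * y₁ = s i * (s i * (t * y₁)) := by rw [hje]
    _ = t * y₁ := cs.simple_mul_simple_cancel_left i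
  | succ k =>
    exfalso
    rw [List.eraseIdx_cons_succ, cs.wordProd_cons] at hje
    have h2 : s i * y₁ = π (δ.eraseIdx k) := by
      rw [← hje, cs.simple_mul_simple_cancel_left]
    have h3 : ℓ (s i * y₁) ≤ (δ.eraseIdx k).length := by
      rw [h2]; exact cs.length_wordProd_le _
    have h4 : k < δ.length := by
      simp only [List.length_cons] at hj
      omega
    have h5 : (δ.eraseIdx k).length + 1 = δ.length := List.length_eraseIdx_add_one h4
    omega

/-- One chain step of the Bruhat order. -/
def Step (x y : W) : Prop := ∃ t, cs.IsReflection t ∧ y = t * x ∧ ℓ x < ℓ y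

lemma length_le_of_chain {x y : W} (h : Relation.ReflTransGen (Step cs) x y) :
    ℓ x ≤ ℓ y := by
  induction h with
  | refl => exact le_refl _
  | tail _ hstep ih =>
    obtain ⟨t, _, rfl, hlt⟩ := hstep
    omega

lemma one_chain (w : W) : Relation.ReflTransGen (Step cs) 1 w := by
  suffices H : ∀ (n : ℕ) (w : W), ℓ w ≤ n → Relation.ReflTransGen (Step cs) 1 w from
    H (ℓ w) w le_rfl
  intro n
  induction n with
  | zero =>
    intro w hw
    have h1 : w = 1 := cs.length_eq_zero_iff.mp (Nat.le_antisymm hw (Nat.zero_le _))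
    rw [h1]
  | succ n ih =>
    intro w hw
    by_cases h : w = 1
    · rw [h]
    · obtain ⟨i, hi⟩ := cs.exists_leftDescent_of_ne_one h
      have hlt : ℓ (s i * w) < ℓ w := hi
      have hih : Relation.ReflTransGen (Step cs) 1 (s i * w) := ih (s i * w) (by omega)
      exact hih.tail ⟨s i, cs.isReflection_simple i,
        (cs.simple_mul_simple_cancel_left i).symm, hlt⟩

lemma parity_ne {y₁ : W} (t : W) (ht : cs.IsReflection t) (i : B) :
    ℓ (s i * (t * y₁)) ≠ ℓ (s i * y₁) := by
  have h1 : ℓ (s i * (t * y₁)) % 2 = (1 + ℓ (t * y₁)) % 2 := by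
    have := cs.length_mul_mod_two (s i) (t * y₁)
    rwa [cs.length_simple] at this
  have h2 : ℓ (s i * y₁) % 2 = (1 + ℓ y₁) % 2 := by
    have := cs.length_mul_mod_two (s i) y₁
    rwa [cs.length_simple] at this
  have h3 : ℓ (t * y₁) % 2 = (ℓ t + ℓ y₁) % 2 := cs.length_mul_mod_two t y₁
  have h4 : ℓ t % 2 = 1 := Nat.odd_iff.mp ht.odd_length
  omega

/-- Lifting: if `x ≤ y` in the Bruhat order then `s i * x ≤ y` or `s i * x ≤ s i * y`. -/
lemma chain_lift {x y : W} (i : B) (h : Relation.ReflTransGen (Step cs) x y) :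
    Relation.ReflTransGen (Step cs) (s i * x) y ∨
      Relation.ReflTransGen (Step cs) (s i * x) (s i * y) := by
  induction h with
  | refl =>
    by_cases hc : ℓ (s i * x) < ℓ x
    · exact Or.inl (Relation.ReflTransGen.single
        ⟨s i, cs.isReflection_simple i, (cs.simple_mul_simple_cancel_left i).symm, hc⟩)
    · exact Or.inr Relation.ReflTransGen.refl
  | @tail y₁ z hxy₁ hstep ih =>
    obtain ⟨t, ht, rfl, hlt⟩ := hstep
    rcases ih with ih | ih
    · exact Or.inl (ih.tail ⟨t, ht, rfl, hlt⟩)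
    · -- ih : s i * x ≤ s i * y₁,  target y = t * y₁
      by_cases hyy : ℓ (s i * y₁) < ℓ (s i * (t * y₁))
      · refine Or.inr (ih.tail ⟨s i * t * s i, ?_, ?_, hyy⟩)
        · have := ht.conj (s i)
          rwa [cs.inv_simple] at this
        · simp only [mul_assoc, cs.simple_mul_simple_cancel_left]
      · have hne : ℓ (s i * (t * y₁)) ≠ ℓ (s i * y₁) := parity_ne cs t ht i
        have hlt2 : ℓ (s i * (t * y₁)) < ℓ (s i * y₁) := by omega
        by_cases hd : ℓ (s i * y₁) < ℓ y₁
        · refine Or.inl ((ih.tail ⟨s i, cs.isReflection_simple i,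
            (cs.simple_mul_simple_cancel_left i).symm, hd⟩).tail ⟨t, ht, rfl, hlt⟩)
        · have hascne : ℓ (s i * y₁) ≠ ℓ y₁ := cs.length_simple_mul_ne y₁ i
          have hasc : ℓ y₁ < ℓ (s i * y₁) := by omega
          rcases cs.length_simple_mul y₁ i with h1 | h1
          · rcases cs.length_simple_mul (t * y₁) i with h2 | h2
            · omega
            · have hcov : ℓ (t * y₁) = ℓ y₁ + 1 := by omega
              have hz := z_property cs i ht hcov hasc (by omega)
              rw [← hz]
              exact Or.inl ih
          · omega

/-- Elements of a parabolic subgroup are products of words in the generators. -/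
lemma exists_word_of_mem_parabolic {J : Set B} {u : W} (hu : u ∈ cs.parabolic J) :
    ∃ α : List B, (∀ i ∈ α, i ∈ J) ∧ π α = u := by
  refine Subgroup.closure_induction ?_ ?_ ?_ ?_ hu
  · rintro x ⟨i, hi, rfl⟩
    exact ⟨[i], by simpa using hi, cs.wordProd_singleton i⟩
  · exact ⟨[], by simp, cs.wordProd_nil⟩
  · rintro x y _ _ ⟨α, hα, rfl⟩ ⟨β, hβ, rfl⟩
    refine ⟨α ++ β, ?_, cs.wordProd_append α β⟩
    intro k hk
    rcases List.mem_append.mp hk with hmem | hmem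
    · exact hα k hmem
    · exact hβ k hmem
  · rintro x _ ⟨α, hα, rfl⟩
    exact ⟨α.reverse, fun k hk => hα k (List.mem_reverse.mp hk), cs.wordProd_reverse α⟩

lemma wordProd_mem_parabolic {J : Set B} {α : List B} (hα : ∀ i ∈ α, i ∈ J) :
    π α ∈ cs.parabolic J := by
  induction α with
  | nil => rw [cs.wordProd_nil]; exact one_mem _
  | cons i α ih =>
    rw [cs.wordProd_cons]
    exact mul_mem (Subgroup.subset_closure ⟨i, hα i List.mem_cons_self, rfl⟩)
      (ih fun j hj => hα j (List.mem_cons_of_mem i hj))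

lemma chain_of_word {w : W} (hw : ∀ i ∈ cs.leftDescents w, ℓ (s i * w) < ℓ w)
    (α : List B) (hα : ∀ i ∈ α, i ∈ cs.leftDescents w) :
    Relation.ReflTransGen (Step cs) (π α) w := by
  induction α with
  | nil => rw [cs.wordProd_nil]; exact one_chain cs w
  | cons i α ih =>
    have hd : ℓ (s i * w) < ℓ w := hw i (hα i List.mem_cons_self)
    have ihc := ih fun j hj => hα j (List.mem_cons_of_mem i hj)
    rw [cs.wordProd_cons]
    rcases chain_lift cs i ihc with h | h
    · exact h
    · exact h.tail ⟨s i, cs.isReflection_simple i,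
        (cs.simple_mul_simple_cancel_left i).symm, hd⟩

lemma mem_parabolic_support (w : W) : w ∈ cs.parabolic (cs.support w) := by
  obtain ⟨ω, hred, hω⟩ := cs.exists_reduced_word' w
  have hmem : π ω ∈ cs.parabolic (cs.support w) :=
    wordProd_mem_parabolic cs fun i hi => ⟨ω, hred, hω.symm, hi⟩
  rw [← hω] at hmem
  exact hmem

end CoxAux

/-- in a finite Coxeter group, `w` is the longest element of the standard
parabolic subgroup `W_{S(w)}` generated by its support iff its left descent set equals
its support: `D_L(w) = S(w)`. -/
theorem isLongest_parabolic_support_iff_descents_eq_support {B W : Type*} [Group W]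
    [Finite W] {M : CoxeterMatrix B} (cs : CoxeterSystem M W) (w : W) :
    cs.IsLongestOf (cs.parabolic (cs.support w)) w ↔ cs.leftDescents w = cs.support w := by
  constructor
  · rintro ⟨hmem, hmax⟩
    ext i
    constructor
    · intro hi
      have hd : cs.length (cs.simple i * w) < cs.length w := hi
      obtain ⟨ρ, hρred, hρ⟩ := cs.exists_reduced_word' (cs.simple i * w)
      have hπ : cs.wordProd (i :: ρ) = w := by
        rw [cs.wordProd_cons, ← hρ, cs.simple_mul_simple_cancel_left]
      refine ⟨i :: ρ, ?_, hπ, List.mem_cons_self⟩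
      show cs.length (cs.wordProd (i :: ρ)) = (i :: ρ).length
      rw [hπ, List.length_cons]
      have hρlen : ρ.length = cs.length (cs.simple i * w) := by
        rw [hρ]
        exact hρred.symm
      rcases cs.length_simple_mul w i with h1 | h1 <;> omega
    · intro hi
      have hsw : cs.simple i * w ∈ cs.parabolic (cs.support w) :=
        mul_mem (Subgroup.subset_closure ⟨i, hi, rfl⟩) hmem
      have hle := hmax _ hsw
      exact lt_of_le_of_ne hle (cs.length_simple_mul_ne w i)
  · intro h
    refine ⟨CoxAux.mem_parabolic_support cs w, ?_⟩
    intro u hu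
    obtain ⟨α, hα, rfl⟩ := CoxAux.exists_word_of_mem_parabolic cs hu
    have hchain := CoxAux.chain_of_word cs (fun i hi => hi) α
      (fun i hi => h ▸ hα i hi)
    exact CoxAux.length_le_of_chain cs hchain
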